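/- Let n be a prime, let Q be a group of exponent n, let p₁, p₂ ∈ Q be nontrivial elements such that the cyclic subgroups ⟨p₁⟩ and ⟨p₂⟩ are not conjugate in Q (i.e., there is no q ∈ Q with q⟨p₁⟩q⁻¹ = ⟨p₂⟩), let φ : ⟨p₁⟩ ≃ ⟨p₂⟩ be the isomorphism with φ(p₁) = p₂, and let G = HNN(Q, ⟨p₁⟩, ⟨p₂⟩, φ) with canonical embedding of : Q → G. Let A ∈ G be an element not conjugate in G to any element of of(Q), and let q₀ ∈ of(Q) be such that A⁻¹ q₀ A ∈ of(Q) and A⁻² q₀ A² ∈ of(Q). Then A⁻¹ q₀ A = q₀. -/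

import Mathlib

open HNNExtension Subgroup

lemma myOrderOf {n : ℕ} (hp : n.Prime) {Q : Type*} [Group Q] {x : Q}
    (hxn : x ^ n = 1) (hx1 : x ≠ 1) : orderOf x = n := by
  rcases (Nat.Prime.eq_one_or_self_of_dvd hp _ (orderOf_dvd_of_pow_eq_one hxn)) with h | h
  · exact absurd (orderOf_eq_one_iff.1 h) hx1
  · exact h

lemma myCent {n : ℕ} (hp : n.Prime) {Q : Type*} [Group Q] (hQexp : ∀ q : Q, q ^ n = 1)
    (c x : Q) (h : c⁻¹ * x * c ∈ zpowers x) : c⁻¹ * x * c = x := by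
  haveI := Fact.mk hp
  by_cases hx1 : x = 1
  · simp [hx1]
  obtain ⟨m, hm⟩ := mem_zpowers_iff.1 h
  have hordx : orderOf x = n := myOrderOf hp (hQexp x) hx1
  have key : ∀ j : ℕ, (c⁻¹) ^ j * x * c ^ j = x ^ (m ^ j) := by
    intro j
    induction j with
    | zero => simp
    | succ j ih =>
      have : (c⁻¹) ^ (j+1) * x * c ^ (j+1) = c⁻¹ * ((c⁻¹) ^ j * x * c ^ j) * c := by
        rw [pow_succ' c⁻¹, pow_succ c]; group
      rw [this, ih]
      have : c⁻¹ * x ^ (m ^ j) * c = (c⁻¹ * x * c) ^ (m ^ j) := by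
        have := map_zpow (MulAut.conj c⁻¹).toMonoidHom x (m ^ j)
        simpa [MulAut.conj_apply, mul_assoc] using this
      rw [this, hm.symm, ← zpow_mul, pow_succ, mul_comm]
  have hxn : x = x ^ (m ^ n) := by
    have := key n
    rwa [hQexp c, inv_pow, hQexp c, inv_one, one_mul, mul_one] at this
  have hdvd1 : (n : ℤ) ∣ m ^ n - 1 := by
    have h1 : x ^ (m ^ n - 1) = 1 := by rw [zpow_sub, zpow_one, ← hxn, mul_inv_cancel]
    have := orderOf_dvd_iff_zpow_eq_one.2 h1
    rwa [hordx] at this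
  have hdvd2 : (n : ℤ) ∣ m ^ n - m := by
    have h1 : ((m : ZMod n)) ^ n = (m : ZMod n) := ZMod.pow_card _
    have : ((m ^ n - m : ℤ) : ZMod n) = 0 := by push_cast [h1]; ring
    exact (ZMod.intCast_zmod_eq_zero_iff_dvd _ _).1 this
  have hdvd : (n : ℤ) ∣ m - 1 := by
    have := dvd_sub hdvd1 hdvd2
    simpa using this
  have : x ^ (m - 1) = 1 := by
    rw [← orderOf_dvd_iff_zpow_eq_one, hordx]; exact hdvd
  calc c⁻¹ * x * c = x ^ m := hm.symm
    _ = x ^ (m - 1) * x ^ (1:ℤ) := by rw [← zpow_add]; ring_nf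
    _ = x := by rw [this, one_mul, zpow_one]

lemma myZpowersEq {n : ℕ} (hp : n.Prime) {Q : Type*} [Group Q] (hQexp : ∀ q : Q, q ^ n = 1)
    {p x : Q} (hp1 : p ≠ 1) (hx : x ∈ zpowers p) (hx1 : x ≠ 1) :
    zpowers x = zpowers p := by
  have hordp : orderOf p = n := myOrderOf hp (hQexp p) hp1
  have hordx : orderOf x = n := myOrderOf hp (hQexp x) hx1
  haveI : Finite (zpowers p) := by
    refine IsOfFinOrder.finite_zpowers ?_
    rw [← orderOf_pos_iff, hordp]; exact hp.pos
  refine Subgroup.eq_of_le_of_card_ge (zpowers_le.2 hx) ?_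
  rw [Nat.card_zpowers, Nat.card_zpowers, hordp, hordx]


section HNN

variable {G : Type*} [Group G] {A B : Subgroup G} {φ : A ≃* B}

noncomputable def prodList (φ : A ≃* B) (l : List (ℤˣ × G)) : HNNExtension G A B φ :=
  (l.map (fun x : ℤˣ × G => (t : HNNExtension G A B φ) ^ (x.1 : ℤ) * HNNExtension.of x.2)).prod

@[simp] lemma prodList_nil : prodList φ ([] : List (ℤˣ × G)) = 1 := rfl

@[simp] lemma prodList_cons (u : ℤˣ) (g : G) (l : List (ℤˣ × G)) :
    prodList φ ((u, g) :: l) = t ^ (u : ℤ) * HNNExtension.of g * prodList φ l := by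
  rw [prodList, List.map_cons, List.prod_cons]; rfl

@[simp] lemma prodList_append (l₁ l₂ : List (ℤˣ × G)) :
    prodList φ (l₁ ++ l₂) = prodList φ l₁ * prodList φ l₂ := by
  rw [prodList, List.map_append, List.prod_append]; rfl

lemma myProdEq (w : NormalWord.ReducedWord G A B) :
    w.prod φ = HNNExtension.of w.head * prodList φ w.toList := rfl

/-- the list for `w⁻¹ (⋯) w` with middle element `m`:
`myNegPart [(u₁,g₁),…,(uₖ,gₖ)] m = [(-uₖ, g_{k-1}⁻¹), …, (-u₂, g₁⁻¹), (-u₁, m)]` -/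
def myNegPart : List (ℤˣ × G) → G → List (ℤˣ × G)
  | [], _ => []
  | (u, g) :: rest, m => myNegPart rest g⁻¹ ++ [(-u, m)]

lemma myNegPart_getLast? (u : ℤˣ) (g : G) (rest : List (ℤˣ × G)) (m : G) :
    (myNegPart ((u, g) :: rest) m).getLast? = some (-u, m) := by
  rw [myNegPart]
  exact List.getLast?_concat

lemma chain'_myNegPart : ∀ (l : List (ℤˣ × G)) (m : G),
    l.Chain' (fun a b => a.2 ∈ toSubgroup A B a.1 → a.1 = b.1) →
    (myNegPart l m).Chain' (fun a b => a.2 ∈ toSubgroup A B a.1 → a.1 = b.1)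
  | [], m, _ => List.isChain_nil
  | (u, g) :: rest, m, hc => by
    rw [myNegPart]
    refine List.isChain_append.2 ⟨chain'_myNegPart rest g⁻¹ hc.tail, List.isChain_singleton _, ?_⟩
    rcases rest with _ | ⟨⟨u₂, g₂⟩, rest'⟩
    · simp [myNegPart]
    · intro a ha b hb
      rw [myNegPart_getLast?] at ha
      simp only [List.head?_cons, Option.mem_def, Option.some_inj] at ha hb
      subst ha; subst hb
      intro hmem
      simp only [neg_inj]
      by_contra hne
      have hne2 : u₂ = -u := Int.units_ne_iff_eq_neg.1 hne
      have hgmem : g ∈ toSubgroup A B u := by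
        have h2 : g⁻¹ ∈ toSubgroup A B (-u₂) := hmem
        rw [hne2, neg_neg] at h2
        exact (toSubgroup A B u).inv_mem_iff.1 h2
      exact hne ((List.isChain_cons_cons.1 hc).1 hgmem).symm

lemma myNegPart_prod : ∀ (l : List (ℤˣ × G)) (hl : l ≠ []) (m : G),
    HNNExtension.of ((l.getLast hl).2)⁻¹ * prodList φ (myNegPart l m)
      = (prodList φ l)⁻¹ * HNNExtension.of m
  | [], hl, _ => absurd rfl hl
  | (u, g) :: rest, hl, m => by
    rcases rest with _ | ⟨⟨u₂, g₂⟩, rest'⟩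
    · simp [myNegPart, mul_assoc, zpow_neg, Units.val_neg]
    · rw [myNegPart, prodList_append]
      have hne : ((u₂, g₂) :: rest' : List (ℤˣ × G)) ≠ [] := by simp
      have hlast : (((u, g) :: (u₂, g₂) :: rest').getLast hl).2
          = (((u₂, g₂) :: rest').getLast hne).2 := by
        rw [List.getLast_cons hne]
      rw [hlast, ← mul_assoc, myNegPart_prod _ hne g⁻¹]
      simp [mul_assoc, zpow_neg, mul_inv_rev, Units.val_neg]


lemma myPinch (w : NormalWord.ReducedWord G A B) (hl : w.toList ≠ []) (x : G)
    (hx : w.head⁻¹ * x * w.head ∉ toSubgroup A B (-(w.toList.head hl).1))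
    (hr : (w.prod φ)⁻¹ * HNNExtension.of x * w.prod φ ∈
      (HNNExtension.of : G →* HNNExtension G A B φ).range) : False := by
  rcases w with ⟨g₀, l, chain⟩
  rcases l with _ | ⟨⟨u₁, g₁⟩, rest⟩
  · exact hl rfl
  set l : List (ℤˣ × G) := (u₁, g₁) :: rest with hldef
  set m : G := g₀⁻¹ * x * g₀ with hmdef
  have hchain : (myNegPart l m ++ l).Chain'
      (fun a b : ℤˣ × G => a.2 ∈ toSubgroup A B a.1 → a.1 = b.1) := by
    refine List.isChain_append.2 ⟨chain'_myNegPart l m chain, chain, ?_⟩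
    intro a ha b hb
    rw [hldef, myNegPart_getLast?] at ha
    simp only [hldef, List.head?_cons, Option.mem_def, Option.some_inj] at ha hb
    subst ha; subst hb
    intro hmem
    exact absurd hmem hx
  set v : NormalWord.ReducedWord G A B := ⟨(l.getLast (by simp [hldef])).2⁻¹, myNegPart l m ++ l, hchain⟩
    with hvdef
  have hvprod : v.prod φ = (NormalWord.ReducedWord.prod φ ⟨g₀, l, chain⟩)⁻¹
      * HNNExtension.of x * NormalWord.ReducedWord.prod φ ⟨g₀, l, chain⟩ := by
    rw [myProdEq, myProdEq, hvdef]
    simp only [prodList_append, ← mul_assoc]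
    rw [myNegPart_prod l (by simp [hldef]) m]
    simp [hmdef, mul_assoc, mul_inv_rev, map_mul, map_inv]
  have := HNNExtension.ReducedWord.toList_eq_nil_of_mem_of_range φ v (by rw [hvprod]; exact hr)
  rw [hvdef] at this
  simp [hldef] at this


lemma myConjT (u : ℤˣ) (a : toSubgroup A B u) :
    HNNExtension.of (toSubgroupEquiv φ u a : G)
      = (t : HNNExtension G A B φ) ^ (u : ℤ) * HNNExtension.of (a : G) * t ^ (-(u : ℤ)) := by
  rcases Int.units_eq_one_or u with rfl | rfl
  · have h := equiv_eq_conj (φ := φ) a; simp at h ⊢; exact h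
  · have h := equiv_symm_eq_conj (φ := φ) a; simp at h ⊢; exact h

lemma myConjNeOne {c x : G} (hx : x ≠ 1) : c⁻¹ * x * c ≠ 1 := by
  intro h
  apply hx
  have : x = c * (c⁻¹ * x * c) * c⁻¹ := by group
  rw [this, h]; group

lemma myMain
    (hprime : ∀ (u : ℤˣ) (x : G), x ∈ toSubgroup A B u → x ≠ 1 →
      zpowers x = toSubgroup A B u)
    (hcent : ∀ c x : G, c⁻¹ * x * c ∈ zpowers x → c⁻¹ * x * c = x)
    (hAB : ∀ (c : G) (u : ℤˣ),
      (toSubgroup A B u).map (MulAut.conj c).toMonoidHom ≠ toSubgroup A B (-u)) :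
    ∀ (l : List (ℤˣ × G)) (hl : l ≠ []) (g₀ : G)
      (chain : l.Chain' (fun a b : ℤˣ × G => a.2 ∈ toSubgroup A B a.1 → a.1 = b.1))
      (q q' : G), q ≠ 1 →
      (HNNExtension.of g₀ * prodList φ l)⁻¹ * HNNExtension.of q
          * (HNNExtension.of g₀ * prodList φ l) = HNNExtension.of q' →
      ∃ hmem : g₀⁻¹ * q * g₀ ∈ toSubgroup A B (-(l.head hl).1),
        q' = ((l.getLast hl).2)⁻¹ * (g₀⁻¹ * q * g₀) * (l.getLast hl).2 ∨
        q' = ((l.getLast hl).2)⁻¹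
          * ((toSubgroupEquiv φ (-(l.head hl).1)) ⟨g₀⁻¹ * q * g₀, hmem⟩ : G)
          * (l.getLast hl).2 := by
  intro l
  induction l with
  | nil => intro hl; exact absurd rfl hl
  | cons hd rest ih =>
    obtain ⟨u, g₁⟩ := hd
    intro hl g₀ chain q q' hq h
    have hmem : g₀⁻¹ * q * g₀ ∈ toSubgroup A B (-u) := by
      by_contra hx
      exact myPinch (φ := φ) ⟨g₀, (u, g₁) :: rest, chain⟩ (by simp) q hx ⟨q', h.symm⟩
    have hx0ne : g₀⁻¹ * q * g₀ ≠ 1 := myConjNeOne hq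
    set q₁ : G := ((toSubgroupEquiv φ (-u)) ⟨g₀⁻¹ * q * g₀, hmem⟩ : G) with hq₁def
    have hq₁mem : q₁ ∈ toSubgroup A B u := by
      rw [show u = - -u from (neg_neg u).symm]
      exact SetLike.coe_mem _
    have hq₁ne : q₁ ≠ 1 := by
      intro h1
      apply hx0ne
      have h2 : (toSubgroupEquiv φ (-u)) ⟨g₀⁻¹ * q * g₀, hmem⟩ = 1 := Subtype.ext h1
      have h3 := (map_eq_one_iff _ (toSubgroupEquiv φ (-u)).injective).1 h2
      exact Subtype.ext_iff.1 h3
    have key : HNNExtension.of q₁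
        = (t : HNNExtension G A B φ) ^ (-(u : ℤ)) * HNNExtension.of (g₀⁻¹ * q * g₀) * t ^ (u : ℤ) := by
      simpa using myConjT (φ := φ) (-u) ⟨g₀⁻¹ * q * g₀, hmem⟩
    have h' : (HNNExtension.of g₁ * prodList φ rest)⁻¹ * HNNExtension.of q₁
        * (HNNExtension.of g₁ * prodList φ rest) = HNNExtension.of q' := by
      rw [← h, key]
      simp [mul_assoc, mul_inv_rev, map_mul, map_inv, zpow_neg]
    rcases rest with _ | ⟨⟨u₂, g₂⟩, rest'⟩
    · have h2 : (HNNExtension.of (g₁⁻¹ * q₁ * g₁) : HNNExtension G A B φ) = HNNExtension.of q' := by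
        rw [map_mul, map_mul, map_inv]
        simpa [mul_assoc] using h'
      have hq' : q' = g₁⁻¹ * q₁ * g₁ := (HNNExtension.of_injective φ h2).symm
      exact ⟨hmem, Or.inr (by simp at hq' ⊢; exact hq')⟩
    · obtain ⟨hmem', hdisj⟩ := ih (by simp) g₁ chain.tail q₁ q' hq₁ne h'
      have hne2 : g₁⁻¹ * q₁ * g₁ ≠ 1 := myConjNeOne hq₁ne
      by_cases hu : u₂ = u
      · subst hu
        exfalso
        have e1 : zpowers q₁ = toSubgroup A B u₂ := hprime u₂ q₁ hq₁mem hq₁ne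
        have e2 : zpowers (g₁⁻¹ * q₁ * g₁) = toSubgroup A B (-u₂) :=
          hprime (-u₂) _ hmem' hne2
        apply hAB g₁⁻¹ u₂
        rw [← e1, MonoidHom.map_zpowers, ← e2]
        congr 1
        simp [MulAut.conj_apply, mul_assoc]
      · have hu2 : u₂ = -u := Int.units_ne_iff_eq_neg.1 hu
        subst hu2
        have hmemc : g₁⁻¹ * q₁ * g₁ ∈ toSubgroup A B (- -u) := hmem'
        rw [neg_neg] at hmemc
        have hmem3 : g₁⁻¹ * q₁ * g₁ ∈ zpowers q₁ := by
          rw [hprime u q₁ hq₁mem hq₁ne]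
          exact hmemc
        have hfix : g₁⁻¹ * q₁ * g₁ = q₁ := hcent g₁ q₁ hmem3
        refine ⟨hmem, ?_⟩
        have hlast_eq : ((((u, g₁) :: (-u, g₂) :: rest')).getLast hl).2
            = ((((-u, g₂) :: rest')).getLast (List.cons_ne_nil _ _)).2 := by
          rw [List.getLast_cons]
        rcases hdisj with h1 | h2
        · right
          rw [hfix] at h1
          rw [hlast_eq]
          exact h1
        · left
          have h2' : q' = ((((-u, g₂) :: rest')).getLast (List.cons_ne_nil _ _)).2⁻¹
              * ((toSubgroupEquiv φ (- -u)) ⟨g₁⁻¹ * q₁ * g₁, hmem'⟩ : G)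
              * ((((-u, g₂) :: rest')).getLast (List.cons_ne_nil _ _)).2 := h2
          have e3 : (⟨g₁⁻¹ * q₁ * g₁, hmem'⟩ : toSubgroup A B (- -u))
              = (toSubgroupEquiv φ (-u)) ⟨g₀⁻¹ * q * g₀, hmem⟩ :=
            Subtype.ext (by
              show g₁⁻¹ * q₁ * g₁ = ((toSubgroupEquiv φ (-u)) ⟨g₀⁻¹ * q * g₀, hmem⟩ : G)
              rw [hfix, hq₁def])
          have e4 : ((toSubgroupEquiv φ (- -u)) ⟨g₁⁻¹ * q₁ * g₁, hmem'⟩ : G)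
              = g₀⁻¹ * q * g₀ := by
            have e5 := congrArg
              (fun z : toSubgroup A B (- -u) => ((toSubgroupEquiv φ (- -u)) z : G)) e3
            exact e5.trans (toSubgroupEquiv_neg_apply φ (-u) ⟨g₀⁻¹ * q * g₀, hmem⟩)
          rw [e4] at h2'
          rw [hlast_eq]
          exact h2'

end HNN


/-- the key claim in the proof of Corollary 2. -/
theorem conj_eq_self_of_two_conjugates_in_base
    (n : ℕ) (hp : n.Prime)
    {Q : Type*} [Group Q] (hQexp : ∀ q : Q, q ^ n = 1)
    (p₁ p₂ : Q) (h₁ : p₁ ≠ 1) (h₂ : p₂ ≠ 1)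
    (hconj : ∀ q : Q,
      (Subgroup.zpowers p₁).map (MulAut.conj q).toMonoidHom ≠ Subgroup.zpowers p₂)
    (φ : (Subgroup.zpowers p₁) ≃* (Subgroup.zpowers p₂))
    (hφ : φ ⟨p₁, Subgroup.mem_zpowers p₁⟩ = ⟨p₂, Subgroup.mem_zpowers p₂⟩)
    (A : HNNExtension Q (Subgroup.zpowers p₁) (Subgroup.zpowers p₂) φ)
    (hA : ¬ ∃ q ∈ (HNNExtension.of :
        Q →* HNNExtension Q (Subgroup.zpowers p₁) (Subgroup.zpowers p₂) φ).range, IsConj A q)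
    (q₀ : HNNExtension Q (Subgroup.zpowers p₁) (Subgroup.zpowers p₂) φ)
    (hq₀ : q₀ ∈ (HNNExtension.of :
        Q →* HNNExtension Q (Subgroup.zpowers p₁) (Subgroup.zpowers p₂) φ).range)
    (hq₁ : A⁻¹ * q₀ * A ∈ (HNNExtension.of :
        Q →* HNNExtension Q (Subgroup.zpowers p₁) (Subgroup.zpowers p₂) φ).range)
    (hq₂ : (A ^ 2)⁻¹ * q₀ * A ^ 2 ∈ (HNNExtension.of :
        Q →* HNNExtension Q (Subgroup.zpowers p₁) (Subgroup.zpowers p₂) φ).range) :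
    A⁻¹ * q₀ * A = q₀ := by
  classical
  obtain ⟨q, rfl⟩ := hq₀
  by_cases hq1 : q = 1
  · subst hq1; simp
  obtain ⟨q', hq'⟩ := hq₁
  obtain ⟨q'', hq''⟩ := hq₂
  have hprime : ∀ (u : ℤˣ) (x : Q),
      x ∈ toSubgroup (zpowers p₁) (zpowers p₂) u → x ≠ 1 →
      zpowers x = toSubgroup (zpowers p₁) (zpowers p₂) u := by
    intro u x hx hx1
    rcases Int.units_eq_one_or u with rfl | rfl
    · exact myZpowersEq hp hQexp h₁ hx hx1
    · exact myZpowersEq hp hQexp h₂ hx hx1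
  have hcent : ∀ c x : Q, c⁻¹ * x * c ∈ zpowers x → c⁻¹ * x * c = x :=
    fun c x h => myCent hp hQexp c x h
  have hAB : ∀ (c : Q) (u : ℤˣ),
      (toSubgroup (zpowers p₁) (zpowers p₂) u).map (MulAut.conj c).toMonoidHom
        ≠ toSubgroup (zpowers p₁) (zpowers p₂) (-u) := by
    intro c u
    rcases Int.units_eq_one_or u with rfl | rfl
    · exact hconj c
    · intro hcontra
      simp only [toSubgroup_neg_one, neg_neg, toSubgroup_one] at hcontra
      apply hconj c⁻¹
      rw [MonoidHom.map_zpowers] at hcontra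
      rw [MonoidHom.map_zpowers]
      have h4 := congrArg (Subgroup.map (MulAut.conj c⁻¹).toMonoidHom) hcontra.symm
      rw [MonoidHom.map_zpowers, MonoidHom.map_zpowers] at h4
      rw [h4]
      congr 1
      simp [MulAut.conj_apply, mul_assoc]
  obtain ⟨d⟩ := HNNExtension.NormalWord.TransversalPair.nonempty Q (zpowers p₁) (zpowers p₂)
  set w := (HNNExtension.NormalWord.equiv φ d) A with hw
  have hAeq : HNNExtension.of w.head * prodList φ w.toList = A :=
    (HNNExtension.NormalWord.equiv φ d).symm_apply_apply A
  by_cases hnil : w.toList = []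
  · exfalso
    apply hA
    have hAof : A = HNNExtension.of w.head := by
      rw [← hAeq, hnil, prodList_nil, mul_one]
    exact ⟨A, ⟨w.head, hAof.symm⟩, IsConj.refl A⟩
  have hq'ne : q' ≠ 1 := by
    intro h1
    apply hq1
    have h3 : A * HNNExtension.of q' * A⁻¹ = HNNExtension.of q := by rw [hq']; group
    rw [h1] at h3
    simp only [map_one, mul_one, mul_inv_cancel] at h3
    exact HNNExtension.of_injective φ
      (show (HNNExtension.of q : HNNExtension Q (zpowers p₁) (zpowers p₂) φ)
        = HNNExtension.of 1 by rw [map_one, ← h3])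
  have happ1 := myMain hprime hcent hAB w.toList hnil w.head w.chain q q' hq1
    (by rw [hAeq]; exact hq'.symm)
  have hstep2 : (HNNExtension.of w.head * prodList φ w.toList)⁻¹ * HNNExtension.of q'
      * (HNNExtension.of w.head * prodList φ w.toList) = HNNExtension.of q'' := by
    rw [hAeq, hq', hq'', pow_two]
    group
  have happ2 := myMain hprime hcent hAB w.toList hnil w.head w.chain q' q'' hq'ne hstep2
  obtain ⟨hm1, hd1⟩ := happ1
  obtain ⟨hm2, _⟩ := happ2
  set u : ℤˣ := (w.toList.head hnil).1 with hu
  set g₀ : Q := w.head with hg₀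
  set gl : Q := (w.toList.getLast hnil).2 with hgl
  have hx₀ne : g₀⁻¹ * q * g₀ ≠ 1 := myConjNeOne hq1
  have hx₀'ne : g₀⁻¹ * q' * g₀ ≠ 1 := myConjNeOne hq'ne
  suffices hqq : q' = q by
    rw [← hq', hqq]
  rcases hd1 with h1 | h1
  · -- even case: q' = q
    have hc : (gl * g₀)⁻¹ * (g₀⁻¹ * q * g₀) * (gl * g₀) ∈ zpowers (g₀⁻¹ * q * g₀) := by
      rw [hprime (-u) _ hm1 hx₀ne]
      have e : (gl * g₀)⁻¹ * (g₀⁻¹ * q * g₀) * (gl * g₀) = g₀⁻¹ * q' * g₀ := by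
        rw [h1, ← hg₀]; group
      rw [e]
      exact hm2
    have hfix := hcent (gl * g₀) _ hc
    have e : (gl * g₀)⁻¹ * (g₀⁻¹ * q * g₀) * (gl * g₀) = g₀⁻¹ * q' * g₀ := by
      rw [h1, ← hg₀]; group
    rw [e] at hfix
    exact mul_left_cancel (mul_right_cancel hfix)
  · -- odd case: contradiction with hAB
    exfalso
    set z : Q := ((toSubgroupEquiv φ (-u)) ⟨g₀⁻¹ * q * g₀, hm1⟩ : Q) with hz
    have hzmem : z ∈ toSubgroup (zpowers p₁) (zpowers p₂) u := by
      rw [show u = - -u from (neg_neg u).symm]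
      exact SetLike.coe_mem _
    have hzne : z ≠ 1 := by
      intro hz1
      apply hx₀ne
      have hz2 : (toSubgroupEquiv φ (-u)) ⟨g₀⁻¹ * q * g₀, hm1⟩ = 1 := Subtype.ext hz1
      have hz3 := (map_eq_one_iff _ (toSubgroupEquiv φ (-u)).injective).1 hz2
      exact Subtype.ext_iff.1 hz3
    have e1 : zpowers z = toSubgroup (zpowers p₁) (zpowers p₂) u := hprime u z hzmem hzne
    have hc : (gl * g₀)⁻¹ * z * (gl * g₀) = g₀⁻¹ * q' * g₀ := by rw [h1]; group
    have e2 : zpowers ((gl * g₀)⁻¹ * z * (gl * g₀))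
        = toSubgroup (zpowers p₁) (zpowers p₂) (-u) := by
      rw [hc]
      exact hprime (-u) _ hm2 hx₀'ne
    apply hAB (gl * g₀)⁻¹ u
    rw [← e1, MonoidHom.map_zpowers, ← e2]
    congr 1
    simp [MulAut.conj_apply, mul_assoc]
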